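/- For z ∈ ℝ and k ≥ 1, the function T_k(z) = z²(1 − (z²/(1+z²))^k) satisfies 0 ≤ T_k(z) ≤ k, and therefore S_k(z) = T_k(z) · (1 − (z²/(1+z²))^k) ≤ k as well; consequently 2/k is an admissible (though not optimal) A-stability threshold: |1 − βS_k(z)| ≤ 1 for all z whenever 0 < β ≤ 2/k. -/

import Mathlib

theorem T_bound_and_stability (z : ℝ) (k : ℕ) (hk : 1 ≤ k) :
    (0 ≤ z ^ 2 * (1 - (z ^ 2 / (1 + z ^ 2)) ^ k)) ∧
    (z ^ 2 * (1 - (z ^ 2 / (1 + z ^ 2)) ^ k) ≤ (k : ℝ)) ∧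
    (z ^ 2 * (1 - (z ^ 2 / (1 + z ^ 2)) ^ k) ^ 2 ≤ (k : ℝ)) ∧
    (∀ β : ℝ, 0 < β → β ≤ 2 / (k : ℝ) →
      |1 - β * (z ^ 2 * (1 - (z ^ 2 / (1 + z ^ 2)) ^ k) ^ 2)| ≤ 1) := by
  have hz : (0:ℝ) < 1 + z ^ 2 := by positivity
  obtain ⟨w, hwdef⟩ : ∃ w : ℝ, w = z ^ 2 / (1 + z ^ 2) := ⟨_, rfl⟩
  rw [← hwdef]
  have hw0 : 0 ≤ w := by rw [hwdef]; positivity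
  have hw1 : w ≤ 1 := by
    rw [hwdef, div_le_one hz]; linarith
  have hwk0 : 0 ≤ w ^ k := pow_nonneg hw0 k
  have hwk1 : w ^ k ≤ 1 := pow_le_one₀ hw0 hw1
  have hfac : 0 ≤ 1 - w ^ k := by linarith
  have hfac1 : 1 - w ^ k ≤ 1 := by linarith
  have hT0 : 0 ≤ z ^ 2 * (1 - w ^ k) := mul_nonneg (by positivity) hfac
  -- key bound T ≤ k
  have hgeom : 1 - w ^ k = (1 - w) * ∑ i ∈ Finset.range k, w ^ i := by
    linear_combination geom_sum_mul w k
  have hsum : ∑ i ∈ Finset.range k, w ^ i ≤ (k : ℝ) := by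
    calc ∑ i ∈ Finset.range k, w ^ i ≤ ∑ i ∈ Finset.range k, (1:ℝ) :=
          Finset.sum_le_sum (fun i _ => pow_le_one₀ hw0 hw1)
      _ = (k : ℝ) := by simp
  have h1w : z ^ 2 * (1 - w) = w := by
    rw [hwdef]; field_simp; ring
  have hTk : z ^ 2 * (1 - w ^ k) ≤ (k : ℝ) := by
    calc z ^ 2 * (1 - w ^ k) = (z ^ 2 * (1 - w)) * ∑ i ∈ Finset.range k, w ^ i := by
          rw [hgeom]; ring
      _ = w * ∑ i ∈ Finset.range k, w ^ i := by rw [h1w]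
      _ ≤ 1 * (k : ℝ) := by
          apply mul_le_mul hw1 hsum (Finset.sum_nonneg fun i _ => pow_nonneg hw0 i) zero_le_one
      _ = (k : ℝ) := one_mul _
  have hS0 : 0 ≤ z ^ 2 * (1 - w ^ k) ^ 2 := by positivity
  have hSk : z ^ 2 * (1 - w ^ k) ^ 2 ≤ (k : ℝ) := by
    calc z ^ 2 * (1 - w ^ k) ^ 2 = (z ^ 2 * (1 - w ^ k)) * (1 - w ^ k) := by ring
      _ ≤ (z ^ 2 * (1 - w ^ k)) * 1 := mul_le_mul_of_nonneg_left hfac1 hT0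
      _ = z ^ 2 * (1 - w ^ k) := mul_one _
      _ ≤ (k : ℝ) := hTk
  refine ⟨hT0, hTk, hSk, fun β hβ0 hβ2 => ?_⟩
  have hkpos : (0:ℝ) < (k : ℝ) := by exact_mod_cast hk
  have hβS : β * (z ^ 2 * (1 - w ^ k) ^ 2) ≤ 2 := by
    calc β * (z ^ 2 * (1 - w ^ k) ^ 2) ≤ (2 / (k:ℝ)) * (k:ℝ) :=
          mul_le_mul hβ2 hSk hS0 (by positivity)
      _ = 2 := by field_simp
  have hβS0 : 0 ≤ β * (z ^ 2 * (1 - w ^ k) ^ 2) := mul_nonneg hβ0.le hS0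
  rw [abs_le]
  constructor <;> linarith
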